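/- Let n, Mₙ be positive integers with 2Mₙ+1 ≤ n, and let a_k(ω) = exp(-i·2πkω)·sin(2π(Mₙ+1/2)k/n)/((2Mₙ+1)sin(πk/n)) for 1 ≤ k ≤ n-1. Then ∑_{k=1}^{n-1} |a_k(ω)|² ≤ min{ 2⌈n/(Mₙ+1/2)⌉ + (π²/3)·n²/(2Mₙ+1)², n-1 }. -/

import Mathlib

open Real Complex

lemma abs_sin_nat_mul_le' (m : ℕ) (x : ℝ) : |Real.sin (m * x)| ≤ m * |Real.sin x| := by
  induction m with
  | zero => simp
  | succ p ih =>
    have h : ((p + 1 : ℕ) : ℝ) * x = p * x + x := by push_cast; ring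
    rw [h, Real.sin_add]
    calc |Real.sin (p*x) * Real.cos x + Real.cos (p*x) * Real.sin x|
        ≤ |Real.sin (p*x) * Real.cos x| + |Real.cos (p*x) * Real.sin x| := abs_add_le _ _
      _ ≤ |Real.sin (p*x)| * 1 + 1 * |Real.sin x| := by
          rw [abs_mul, abs_mul]
          gcongr
          · exact Real.abs_cos_le_one x
          · exact Real.abs_cos_le_one _
      _ ≤ ((p:ℝ) + 1) * |Real.sin x| := by nlinarith [abs_nonneg (Real.sin x)]
      _ = ((p + 1 : ℕ) : ℝ) * |Real.sin x| := by push_cast; ring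

theorem stmt_7 (n Mn : ℕ) (hn : 0 < n) (hMn : 0 < Mn) (hle : 2 * Mn + 1 ≤ n) (ω : ℝ)
    (a : ℕ → ℂ)
    (ha : ∀ k, 1 ≤ k → k ≤ n - 1 →
      a k = Complex.exp (-(Complex.I) * (2 * π * k * ω)) *
        ((Real.sin (2 * π * ((Mn : ℝ) + 1 / 2) * k / n) /
          ((2 * (Mn : ℝ) + 1) * Real.sin (π * k / n)) : ℝ) : ℂ)) :
    ∑ k ∈ Finset.Icc 1 (n - 1), ‖a k‖ ^ 2 ≤
      min (2 * (⌈(n : ℝ) / ((Mn : ℝ) + 1 / 2)⌉ : ℝ) + (π ^ 2 / 3) * (n : ℝ) ^ 2 / (2 * (Mn : ℝ) + 1) ^ 2)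
        ((n : ℝ) - 1) := by
  have hπ := Real.pi_pos
  have hn2 : 3 ≤ n := by omega
  have hnR : (0:ℝ) < n := by exact_mod_cast hn
  have hMpos : (0:ℝ) < 2*(Mn:ℝ)+1 := by positivity
  -- positivity of sin at the sample points
  have hsinpos : ∀ k, 1 ≤ k → k ≤ n - 1 → 0 < Real.sin (π * k / n) := by
    intro k hk1 hk2
    have hk0 : (0:ℝ) < k := by exact_mod_cast hk1
    have hkn : (k:ℝ) < n := by exact_mod_cast (by omega : k < n)
    apply Real.sin_pos_of_pos_of_lt_pi
    · positivity
    · rw [div_lt_iff₀ hnR]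
      nlinarith
  -- rewrite each summand
  have habs : ∀ k ∈ Finset.Icc 1 (n-1),
      ‖a k‖ ^ 2 =
        (Real.sin ((2*(Mn:ℝ)+1) * (π * k / n)) / ((2*(Mn:ℝ)+1) * Real.sin (π * k / n)))^2 := by
    intro k hk
    rw [Finset.mem_Icc] at hk
    rw [ha k hk.1 hk.2, norm_mul]
    have h1 : -(Complex.I) * (2 * ↑π * ↑k * ↑ω) = ((-(2*π*k*ω) : ℝ) : ℂ) * Complex.I := by
      push_cast; ring
    rw [h1, Complex.norm_exp_ofReal_mul_I, one_mul, Complex.norm_real, Real.norm_eq_abs, _root_.sq_abs]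
    have harg : 2 * π * ((Mn:ℝ) + 1/2) * (k:ℝ) / n = (2*(Mn:ℝ)+1) * (π * k / n) := by ring
    rw [harg]
  rw [Finset.sum_congr rfl habs]
  set f : ℕ → ℝ := fun k =>
    (Real.sin ((2*(Mn:ℝ)+1) * (π * k / n)) / ((2*(Mn:ℝ)+1) * Real.sin (π * k / n)))^2 with hf
  -- the key |sin((2Mn+1)x)| ≤ (2Mn+1) sin x bound
  have hkey : ∀ k, 1 ≤ k → k ≤ n - 1 →
      |Real.sin ((2*(Mn:ℝ)+1) * (π * k / n))| ≤ (2*(Mn:ℝ)+1) * Real.sin (π * k / n) := by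
    intro k hk1 hk2
    have hs := hsinpos k hk1 hk2
    have h := abs_sin_nat_mul_le' (2*Mn+1) (π * k / n)
    have hc : ((2*Mn+1 : ℕ):ℝ) = 2*(Mn:ℝ)+1 := by push_cast; ring
    rw [hc, abs_of_pos hs] at h
    exact h
  -- bound 2 : each term ≤ 1
  have hb2 : ∑ k ∈ Finset.Icc 1 (n-1), f k ≤ (n:ℝ) - 1 := by
    have hone : ∀ k ∈ Finset.Icc 1 (n-1), f k ≤ 1 := by
      intro k hk
      rw [Finset.mem_Icc] at hk
      have hs := hsinpos k hk.1 hk.2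
      have h := hkey k hk.1 hk.2
      simp only [hf]
      rw [div_pow, div_le_one (by positivity)]
      nlinarith [abs_nonneg (Real.sin ((2*(Mn:ℝ)+1) * (π * k / n))),
        _root_.sq_abs (Real.sin ((2*(Mn:ℝ)+1) * (π * k / n)))]
    calc ∑ k ∈ Finset.Icc 1 (n-1), f k ≤ ∑ _k ∈ Finset.Icc 1 (n-1), (1:ℝ) :=
          Finset.sum_le_sum hone
      _ = ((n-1 : ℕ):ℝ) := by
          rw [Finset.sum_const, Nat.card_Icc]
          simp
      _ = (n:ℝ) - 1 := by
          rw [Nat.cast_sub (by omega)]; norm_num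
  -- bound 1
  have hb1 : ∑ k ∈ Finset.Icc 1 (n-1), f k ≤
      2 * (⌈(n : ℝ) / ((Mn : ℝ) + 1 / 2)⌉ : ℝ) + (π ^ 2 / 3) * (n : ℝ) ^ 2 / (2 * (Mn : ℝ) + 1) ^ 2 := by
    -- per-term bound
    have hterm : ∀ k ∈ Finset.Icc 1 (n-1),
        f k ≤ (n:ℝ)^2 / (4 * (2*(Mn:ℝ)+1)^2) * (1/(k:ℝ)^2 + 1/((n:ℝ)-k)^2) := by
      intro k hk
      rw [Finset.mem_Icc] at hk
      have hs := hsinpos k hk.1 hk.2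
      have hk0 : (0:ℝ) < k := by exact_mod_cast hk.1
      have hkn : (k:ℝ) < n := by exact_mod_cast (by omega : k < n)
      have hnk0 : (0:ℝ) < (n:ℝ) - k := by linarith
      -- sin(πk/n) ≥ 2*min(k,n-k)/n
      have hlow : 2 * min (k:ℝ) ((n:ℝ)-k) / n ≤ Real.sin (π * k / n) := by
        rcases le_or_gt (2*k) n with hcase | hcase
        · have h2k : 2*(k:ℝ) ≤ n := by exact_mod_cast hcase
          have hx2 : π * k / n ≤ π / 2 := by
            rw [div_le_div_iff₀ hnR two_pos]
            nlinarith
          have := Real.mul_le_sin (x := π * k / n) (by positivity) hx2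
          have hmin : min (k:ℝ) ((n:ℝ)-k) ≤ k := min_le_left _ _
          calc 2 * min (k:ℝ) ((n:ℝ)-k) / n ≤ 2 * (k:ℝ) / n := by gcongr
            _ = 2 / π * (π * k / n) := by field_simp
            _ ≤ Real.sin (π * k / n) := this
        · have h2k : (n:ℝ) < 2*(k:ℝ) := by exact_mod_cast hcase
          have heq : Real.sin (π * k / n) = Real.sin (π * ((n:ℝ)-k) / n) := by
            rw [show π * ((n:ℝ)-k) / n = π - π * k / n by field_simp, Real.sin_pi_sub]
          have hx2 : π * ((n:ℝ)-k) / n ≤ π / 2 := by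
            rw [div_le_div_iff₀ hnR two_pos]
            nlinarith
          have := Real.mul_le_sin (x := π * ((n:ℝ)-k) / n) (by positivity) hx2
          have hmin : min (k:ℝ) ((n:ℝ)-k) ≤ (n:ℝ)-k := min_le_right _ _
          rw [heq]
          calc 2 * min (k:ℝ) ((n:ℝ)-k) / n ≤ 2 * ((n:ℝ)-k) / n := by gcongr
            _ = 2 / π * (π * ((n:ℝ)-k) / n) := by field_simp
            _ ≤ Real.sin (π * ((n:ℝ)-k) / n) := this
      have hminpos : 0 < min (k:ℝ) ((n:ℝ)-k) := lt_min hk0 hnk0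
      -- f k ≤ 1/((2Mn+1) sin x)^2 ≤ n²/(4M² min²)
      have h1 : f k ≤ 1 / ((2*(Mn:ℝ)+1) * Real.sin (π * k / n))^2 := by
        simp only [hf]
        rw [div_pow]
        gcongr
        nlinarith [Real.neg_one_le_sin ((2*(Mn:ℝ)+1) * (π * k / n)),
          Real.sin_le_one ((2*(Mn:ℝ)+1) * (π * k / n))]
      have h2 : 1 / ((2*(Mn:ℝ)+1) * Real.sin (π * k / n))^2 ≤
          (n:ℝ)^2 / (4 * (2*(Mn:ℝ)+1)^2 * (min (k:ℝ) ((n:ℝ)-k))^2) := by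
        have hstep : 1 / ((2*(Mn:ℝ)+1) * Real.sin (π * k / n))^2 ≤
            1 / ((2*(Mn:ℝ)+1) * (2 * min (k:ℝ) ((n:ℝ)-k) / n))^2 := by
          gcongr
        have heq : 1 / ((2*(Mn:ℝ)+1) * (2 * min (k:ℝ) ((n:ℝ)-k) / n))^2 =
            (n:ℝ)^2 / (4 * (2*(Mn:ℝ)+1)^2 * (min (k:ℝ) ((n:ℝ)-k))^2) := by
          field_simp
          ring
        rw [heq] at hstep
        exact hstep
      have hinv : 1 / (min (k:ℝ) ((n:ℝ)-k))^2 ≤ 1/(k:ℝ)^2 + 1/((n:ℝ)-k)^2 := by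
        have hp1 : (0:ℝ) < 1/(k:ℝ)^2 := by positivity
        have hp2 : (0:ℝ) < 1/((n:ℝ)-k)^2 := by positivity
        rcases min_cases (k:ℝ) ((n:ℝ)-k) with ⟨hm, _⟩ | ⟨hm, _⟩ <;> rw [hm] <;> linarith
      have h3 : (n:ℝ)^2 / (4 * (2*(Mn:ℝ)+1)^2 * (min (k:ℝ) ((n:ℝ)-k))^2) ≤
          (n:ℝ)^2 / (4 * (2*(Mn:ℝ)+1)^2) * (1/(k:ℝ)^2 + 1/((n:ℝ)-k)^2) := by
        have heq : (n:ℝ)^2 / (4 * (2*(Mn:ℝ)+1)^2 * (min (k:ℝ) ((n:ℝ)-k))^2) =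
            (n:ℝ)^2 / (4 * (2*(Mn:ℝ)+1)^2) * (1 / (min (k:ℝ) ((n:ℝ)-k))^2) := by
          rw [div_mul_div_comm, mul_one]
        rw [heq]
        gcongr
      linarith
    -- sum the bound    -- sum the bound
    have hS1 : ∑ k ∈ Finset.Icc 1 (n-1), 1/(k:ℝ)^2 ≤ π^2/6 := by
      exact sum_le_hasSum (Finset.Icc 1 (n-1)) (fun i _ => by positivity) hasSum_zeta_two
    have hS2 : ∑ k ∈ Finset.Icc 1 (n-1), 1/((n:ℝ)-k)^2 = ∑ k ∈ Finset.Icc 1 (n-1), 1/(k:ℝ)^2 := by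
      apply Finset.sum_nbij' (i := fun k => n - k) (j := fun k => n - k)
      · intro k hk; rw [Finset.mem_Icc] at *; omega
      · intro k hk; rw [Finset.mem_Icc] at *; omega
      · intro k hk; rw [Finset.mem_Icc] at hk; omega
      · intro k hk; rw [Finset.mem_Icc] at hk; omega
      · intro k hk
        rw [Finset.mem_Icc] at hk
        rw [Nat.cast_sub (by omega)]
    have hsum : ∑ k ∈ Finset.Icc 1 (n-1), f k ≤
        (n:ℝ)^2 / (4 * (2*(Mn:ℝ)+1)^2) * (π^2/3) := by
      calc ∑ k ∈ Finset.Icc 1 (n-1), f k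
          ≤ ∑ k ∈ Finset.Icc 1 (n-1),
              (n:ℝ)^2 / (4 * (2*(Mn:ℝ)+1)^2) * (1/(k:ℝ)^2 + 1/((n:ℝ)-k)^2) :=
            Finset.sum_le_sum hterm
        _ = (n:ℝ)^2 / (4 * (2*(Mn:ℝ)+1)^2) *
              (∑ k ∈ Finset.Icc 1 (n-1), 1/(k:ℝ)^2 + ∑ k ∈ Finset.Icc 1 (n-1), 1/((n:ℝ)-k)^2) := by
            rw [← Finset.mul_sum, Finset.sum_add_distrib]
        _ ≤ (n:ℝ)^2 / (4 * (2*(Mn:ℝ)+1)^2) * (π^2/6 + π^2/6) := by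
            gcongr
            rw [hS2]; exact hS1
        _ = (n:ℝ)^2 / (4 * (2*(Mn:ℝ)+1)^2) * (π^2/3) := by ring
    have hceil : (1:ℝ) ≤ (⌈(n : ℝ) / ((Mn : ℝ) + 1 / 2)⌉ : ℝ) := by
      have : (0:ℤ) < ⌈(n : ℝ) / ((Mn : ℝ) + 1 / 2)⌉ := by
        rw [Int.ceil_pos]
        positivity
      exact_mod_cast this
    have hfin : (n:ℝ)^2 / (4 * (2*(Mn:ℝ)+1)^2) * (π^2/3) ≤
        (π ^ 2 / 3) * (n : ℝ) ^ 2 / (2 * (Mn : ℝ) + 1) ^ 2 := by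
      have heq : (n:ℝ)^2 / (4 * (2*(Mn:ℝ)+1)^2) * (π^2/3) =
          ((π ^ 2 / 3) * (n : ℝ) ^ 2 / (2 * (Mn : ℝ) + 1) ^ 2) / 4 := by
        field_simp
      have hpos : (0:ℝ) ≤ (π ^ 2 / 3) * (n : ℝ) ^ 2 / (2 * (Mn : ℝ) + 1) ^ 2 := by positivity
      linarith [heq.le, heq.ge]
    linarith
  exact le_min hb1 hb2
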